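/- Let G = (V,E) be a finite graph with positive edge weights and a fixed enumeration E = e_1, …, e_m of its edges satisfying the ζ-strong E-order assumption for some ζ ≥ 0. Then every Naive-Edge matching M' satisfies w(M) ≤ 2·max{1, ζ}·w(M') for every matching M of G; in other words, the Naive-Edge algorithm, which inspects no weights, is 2·max{1,ζ}-approximate. -/
import Mathlib


/-- A matching within the edge set `E` (edges as unordered pairs of vertices):
a subset of `E` in which no two distinct edges share an endpoint. -/
def IsGraphMatching {V : Type*} (E M : Finset (Sym2 V)) : Prop :=
  M ⊆ E ∧ ∀ e₁ ∈ M, ∀ e₂ ∈ M, e₁ ≠ e₂ → ∀ v : V, ¬(v ∈ e₁ ∧ v ∈ e₂)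

/-- Under the ζ-strong E-order assumption on the enumeration `e 0, …, e (m-1)` of the edges,
every Naive-Edge matching `M'` (every non-selected edge is blocked by an earlier selected
edge sharing one of its endpoints) is 2·max{1,ζ}-approximate. -/
theorem stmt14 {V : Type*} [Fintype V] [DecidableEq V] (m : ℕ)
    (e : Fin m → Sym2 V) (he : Function.Injective e)
    (w : Sym2 V → ℝ) (hw : ∀ i : Fin m, 0 < w (e i))
    (ζ : ℝ) (hζ : 0 ≤ ζ) (hord : ∀ i j : Fin m, i < j → w (e j) ≤ ζ * w (e i))
    (M' : Finset (Sym2 V)) (hM' : IsGraphMatching (Finset.image e Finset.univ) M')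
    (hNE : ∀ j : Fin m, e j ∉ M' →
      ∃ i : Fin m, i < j ∧ e i ∈ M' ∧ ∃ v : V, v ∈ e i ∧ v ∈ e j)
    (M : Finset (Sym2 V)) (hM : IsGraphMatching (Finset.image e Finset.univ) M) :
    ∑ f ∈ M, w f ≤ 2 * max 1 ζ * ∑ f ∈ M', w f := by
  classical
  obtain ⟨hM'sub, hM'match⟩ := hM'
  obtain ⟨hMsub, hMmatch⟩ := hM
  have hwM' : ∀ g ∈ M', 0 < w g := by
    intro g hg
    obtain ⟨i, -, rfl⟩ := Finset.mem_image.mp (hM'sub hg)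
    exact hw i
  set K := max 1 ζ with hK
  have hK1 : (1 : ℝ) ≤ K := le_max_left _ _
  have hKζ : ζ ≤ K := le_max_right _ _
  have hK0 : (0 : ℝ) ≤ K := by linarith
  have hsum' : 0 ≤ ∑ f ∈ M', w f := Finset.sum_nonneg fun g hg => (hwM' g hg).le
  rcases M.eq_empty_or_nonempty with rfl | ⟨f0, hf0⟩
  · simpa using mul_nonneg (by positivity) hsum'
  haveI : Nonempty V := ⟨f0.out.1⟩
  haveI : Inhabited V := Classical.inhabited_of_nonempty ‹_›
  -- the charging assignment
  have key : ∀ f ∈ M, ∃ p : Sym2 V × V,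
      p.1 ∈ M' ∧ p.2 ∈ p.1 ∧ p.2 ∈ f ∧ w f ≤ K * w p.1 := by
    intro f hf
    obtain ⟨j, -, rfl⟩ := Finset.mem_image.mp (hMsub hf)
    by_cases hj : e j ∈ M'
    · exact ⟨(e j, (e j).out.1), hj, Sym2.out_fst_mem _, Sym2.out_fst_mem _,
        le_mul_of_one_le_left (hw j).le hK1⟩
    · obtain ⟨i, hij, hi, v, hvi, hvj⟩ := hNE j hj
      exact ⟨(e i, v), hi, hvi, hvj,
        (hord i j hij).trans (mul_le_mul_of_nonneg_right hKζ (hw i).le)⟩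
  have key' : ∀ f : Sym2 V, ∃ p : Sym2 V × V, f ∈ M →
      p.1 ∈ M' ∧ p.2 ∈ p.1 ∧ p.2 ∈ f ∧ w f ≤ K * w p.1 := by
    intro f
    by_cases hf : f ∈ M
    · obtain ⟨p, hp⟩ := key f hf; exact ⟨p, fun _ => hp⟩
    · exact ⟨default, fun h => absurd h hf⟩
  choose c hc using key'
  -- injectivity of the charging assignment on M
  have hinj : ∀ f₁ ∈ M, ∀ f₂ ∈ M, c f₁ = c f₂ → f₁ = f₂ := by
    intro f₁ h₁ f₂ h₂ hcc
    by_contra hne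
    obtain ⟨-, -, hf1, -⟩ := hc f₁ h₁
    obtain ⟨-, -, hf2, -⟩ := hc f₂ h₂
    exact hMmatch f₁ h₁ f₂ h₂ hne (c f₁).2 ⟨hf1, by rw [hcc]; exact hf2⟩
  set T : Finset (Sym2 V × V) :=
    (M' ×ˢ Finset.univ).filter (fun p => p.2 ∈ p.1) with hTdef
  have hT : M.image c ⊆ T := by
    intro p hp
    obtain ⟨f, hf, rfl⟩ := Finset.mem_image.mp hp
    obtain ⟨h1, h2, -, -⟩ := hc f hf
    simp [hTdef, Finset.mem_filter, Finset.mem_product, h1, h2]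
  have hfilter : ∑ p ∈ T, w p.1 ≤ 2 * ∑ g ∈ M', w g := by
    rw [hTdef, Finset.sum_filter, Finset.sum_product, Finset.mul_sum]
    apply Finset.sum_le_sum
    intro g hg
    have hrw : ∑ v : V, (if v ∈ g then w g else 0)
        = ((Finset.univ.filter (· ∈ g)).card : ℝ) * w g := by
      rw [← Finset.sum_filter, Finset.sum_const, nsmul_eq_mul]
    have hcard : (Finset.univ.filter (· ∈ g)).card ≤ 2 := by
      induction g using Sym2.ind with
      | _ a b =>
        have hsub : Finset.univ.filter (· ∈ s(a, b)) ⊆ {a, b} := by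
          intro v hv
          simp only [Finset.mem_filter, Sym2.mem_iff] at hv
          simp [hv.2]
        exact (Finset.card_le_card hsub).trans (by simpa using Finset.card_insert_le a {b})
    rw [hrw]
    have : ((Finset.univ.filter (· ∈ g)).card : ℝ) ≤ 2 := by exact_mod_cast hcard
    exact mul_le_mul_of_nonneg_right this (hwM' g hg).le
  calc ∑ f ∈ M, w f ≤ ∑ f ∈ M, K * w (c f).1 :=
        Finset.sum_le_sum fun f hf => (hc f hf).2.2.2
    _ = K * ∑ f ∈ M, w (c f).1 := by rw [Finset.mul_sum]
    _ = K * ∑ p ∈ M.image c, w p.1 := by rw [Finset.sum_image hinj]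
    _ ≤ K * ∑ p ∈ T, w p.1 := by
        refine mul_le_mul_of_nonneg_left ?_ hK0
        refine Finset.sum_le_sum_of_subset_of_nonneg hT fun p hp _ => ?_
        exact (hwM' p.1 (Finset.mem_product.mp (Finset.mem_filter.mp hp).1).1).le
    _ ≤ K * (2 * ∑ g ∈ M', w g) := mul_le_mul_of_nonneg_left hfilter hK0
    _ = 2 * K * ∑ f ∈ M', w f := by ring
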